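/- Let C be a linear code over the ring F₂ + uF₂ (u² = 0) and φ the Gray map sending a + bu ↦ (b, a+b) componentwise. If C is self-orthogonal with respect to the Euclidean inner product, then φ(C) is a self-orthogonal binary linear code of twice the length. -/

import Mathlib

open BigOperators

/-- The Gray map `φ : (F₂ + uF₂)ⁿ → F₂^{2n}`, `a + bu ↦ (b, a + b)` componentwise,
where `F₂ + uF₂` is modelled as the dual numbers over `F₂` (`fst = a`, `snd = b`). -/
def grayMap (n : ℕ) (x : Fin n → DualNumber (ZMod 2)) : Fin n ⊕ Fin n → ZMod 2 :=
  Sum.elim (fun i => (x i).snd) (fun i => (x i).fst + (x i).snd)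

theorem grayMap_self_orthogonal (n : ℕ)
    (C : Submodule (DualNumber (ZMod 2)) (Fin n → DualNumber (ZMod 2)))
    (hC : ∀ x ∈ C, ∀ y ∈ C, ∑ i, x i * y i = 0) :
    (∃ D : Submodule (ZMod 2) (Fin n ⊕ Fin n → ZMod 2),
      (D : Set (Fin n ⊕ Fin n → ZMod 2)) = grayMap n '' C) ∧
    (∀ x ∈ C, ∀ y ∈ C, ∑ j, grayMap n x j * grayMap n y j = 0) := by
  constructor
  · refine ⟨⟨⟨⟨grayMap n '' C, ?_⟩, ⟨0, C.zero_mem, ?_⟩⟩, ?_⟩, rfl⟩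
    · rintro a b ⟨x, hx, rfl⟩ ⟨y, hy, rfl⟩
      refine ⟨x + y, C.add_mem hx hy, ?_⟩
      funext j
      cases j <;> simp [grayMap] <;> ring
    · funext j; cases j <;> simp [grayMap]
    · rintro c v ⟨x, hx, rfl⟩
      fin_cases c
      · refine ⟨0, C.zero_mem, ?_⟩
        funext j
        cases j <;> simp [grayMap] <;> exact (congrFun (zero_smul (ZMod 2) (grayMap n x)) _).symm
      · refine ⟨x, hx, ?_⟩
        funext j; simp
        exact (congrFun (one_smul (ZMod 2) (grayMap n x)) j).symm
  · intro x hx y hy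
    have h := hC x hx y hy
    have h1 : ∑ i, ((x i).fst * (y i).fst) = 0 := by
      have := congrArg TrivSqZeroExt.fst h
      simpa [TrivSqZeroExt.fst_sum] using this
    have h2 : ∑ i, ((x i).fst * (y i).snd + (x i).snd * (y i).fst) = 0 := by
      have := congrArg TrivSqZeroExt.snd h
      simpa [TrivSqZeroExt.snd_sum, TrivSqZeroExt.snd_mul, smul_eq_mul, mul_comm] using this
    have key : ∀ a : ZMod 2, a + a = 0 := by decide
    calc ∑ j, grayMap n x j * grayMap n y j
        = ∑ i, (x i).snd * (y i).snd
          + ∑ i, ((x i).fst + (x i).snd) * ((y i).fst + (y i).snd) := by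
          simp [grayMap, Fintype.sum_sum_type]
      _ = ∑ i, ((x i).fst * (y i).fst)
          + ∑ i, ((x i).fst * (y i).snd + (x i).snd * (y i).fst)
          + ∑ i, ((x i).snd * (y i).snd + (x i).snd * (y i).snd) := by
          rw [← Finset.sum_add_distrib, ← Finset.sum_add_distrib, ← Finset.sum_add_distrib]
          exact Finset.sum_congr rfl fun i _ => by ring
      _ = 0 := by
          simp [h1, h2, key]
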